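/- arXiv:0901.0377 — 2 statements merged into one kernel-verified Lean document; each statement's English description precedes it below -/
import Mathlib

section
/- Let (π, K) be a ĝ[σ]-module structure on W in category C, with π_R and π_E = π − π_R as defined. Let i ∈ ℤ and let a ∈ g_i satisfy B(a,a) = 0, and suppose that for every k ≡ i (mod N) the operator π(s^k ⊗ a) acts locally nilpotently on W (for every w ∈ W there is m with π(s^k ⊗ a)^m w = 0). Then for every k ≡ i (mod N), both π_R(s^k ⊗ a) and π_E(s^k ⊗ a) act locally nilpotently on W. -/
open scoped TensorProduct

noncomputable section
namespace Twisted

variable (g : Type) [LieRing g] [LieAlgebra ℂ g]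

abbrev Amb : Type := LaurentPolynomial ℂ ⊗[ℂ] g

instance : LieAlgebra ℂ (Amb g) :=
  { (inferInstance : Module ℂ (Amb g)) with
    lie_smul := fun c x y => by
      rw [← algebraMap_smul (LaurentPolynomial ℂ) c y,
        lie_smul (R := LaurentPolynomial ℂ) (algebraMap ℂ (LaurentPolynomial ℂ) c) x y,
        algebraMap_smul] }

/-- `ε = exp(2πi/N)`. -/
def eps (N : ℕ) : ℂ := Complex.exp (2 * (Real.pi : ℂ) * Complex.I / (N : ℂ))

variable (σ : g ≃ₗ⁅ℂ⁆ g) (N : ℕ)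

/-- `a ∈ g_k`, i.e. `σ a = ε^k • a`. -/
def homog (k : ℤ) (a : g) : Prop := σ a = eps N ^ k • a

/-- The generators `s^k ⊗ a`, for `a ∈ g_k`. -/
def genSet : Set (Amb g) :=
  {x | ∃ (k : ℤ) (a : g), homog g σ N k a ∧ x = LaurentPolynomial.T k ⊗ₜ[ℂ] a}

/-- The twisted loop algebra `L(g,σ)`, the Lie subalgebra of `ℂ[s,s⁻¹] ⊗ g`
spanned by the elements `s^k ⊗ a` with `a ∈ g_k`. -/
def Loop : LieSubalgebra ℂ (Amb g) := LieSubalgebra.lieSpan ℂ (Amb g) (genSet g σ N)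

/-- The element `s^k ⊗ a` of `L(g,σ)`, for `a ∈ g_k`. -/
def sGen (k : ℤ) (a : g) (h : homog g σ N k a) : Loop g σ N :=
  ⟨LaurentPolynomial.T k ⊗ₜ[ℂ] a, LieSubalgebra.subset_lieSpan ⟨k, a, h, rfl⟩⟩

/-- The element `(s^k p(s^N)) ⊗ a` of `L(g,σ)`, for `a ∈ g_k`. -/
def sPolyGen (p : Polynomial ℂ) (k : ℤ) (a : g)
    (h : ∀ i : ℕ, homog g σ N (k + N * i) a) : Loop g σ N :=
  ∑ i ∈ Finset.range (p.natDegree + 1), p.coeff i • sGen g σ N (k + N * i) a (h i)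

variable (N : ℕ) (W : Type) [AddCommGroup W] [Module ℂ W]

/-- The shift operator on `F(W) = (ℤ → End W)`, encoding multiplication by `x`:
`(x·a)_k = a_{k+N}`. -/
def shiftE : Module.End ℂ (ℤ → Module.End ℂ W) where
  toFun a := fun k => a (k + N)
  map_add' _ _ := rfl
  map_smul' _ _ := rfl

/-- The action of `ℂ[x]` on `F(W)`. -/
def polyAct (p : Polynomial ℂ) (a : ℤ → Module.End ℂ W) : ℤ → Module.End ℂ W :=
  Polynomial.aeval (shiftE N W) p a

/-- Membership in `E(W)`. -/
def memE (a : ℤ → Module.End ℂ W) : Prop :=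
  ∀ w : W, ∃ M : ℤ, ∀ k ≥ M, a k w = 0

/-- Membership in `Ē(W)`. -/
def memEbar (a : ℤ → Module.End ℂ W) : Prop :=
  ∃ p : Polynomial ℂ, p ≠ 0 ∧ memE W (polyAct N W p a)

/-- Membership in `Ē₀(W)`. -/
def memE0 (a : ℤ → Module.End ℂ W) : Prop :=
  ∃ p : Polynomial ℂ, p ≠ 0 ∧ polyAct N W p a = 0

variable (g : Type) [LieRing g] [LieAlgebra ℂ g] (σ : g ≃ₗ⁅ℂ⁆ g) (N : ℕ)
variable (B : LinearMap.BilinForm ℂ g)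

/-- `γ` is the bilinear form on `L(g,σ)` with
`γ(s^m ⊗ a, s^n ⊗ b) = (m/N) B(a,b) δ_{m+n,0}`. -/
def IsGamma (γ : Loop g σ N →ₗ[ℂ] Loop g σ N →ₗ[ℂ] ℂ) : Prop :=
  ∀ (m n : ℤ) (a b : g) (ha : homog g σ N m a) (hb : homog g σ N n b),
    γ (sGen g σ N m a ha) (sGen g σ N n b hb) =
      if m + n = 0 then (m : ℂ) / (N : ℂ) * B a b else 0

variable (W : Type) [AddCommGroup W] [Module ℂ W]

/-- `(π, K)` is a `ĝ[σ]`-module structure on `W` (relative to the form `γ`). -/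
def IsHatMod (π : Loop g σ N →ₗ[ℂ] Module.End ℂ W) (K : Module.End ℂ W)
    (γ : Loop g σ N →ₗ[ℂ] Loop g σ N →ₗ[ℂ] ℂ) : Prop :=
  (∀ u, K * π u = π u * K) ∧
  (∀ u v, π u * π v - π v * π u = π ⁅u, v⁆ + γ u v • K)

/-- `(π, K)` is restricted. -/
def IsRestricted (π : Loop g σ N →ₗ[ℂ] Module.End ℂ W) : Prop :=
  ∀ (w : W) (i : ℤ) (a : g), homog g σ N i a →
    ∃ M : ℤ, ∀ k ≥ M, ∀ h : homog g σ N k a, π (sGen g σ N k a h) w = 0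

/-- `(π, K)` is irreducible. -/
def IsIrred (π : Loop g σ N →ₗ[ℂ] Module.End ℂ W) (K : Module.End ℂ W) : Prop :=
  Nontrivial W ∧ ∀ S : Submodule ℂ W, (∀ x ∈ S, K x ∈ S) →
    (∀ u, ∀ x ∈ S, π u x ∈ S) → S = ⊥ ∨ S = ⊤

open scoped Classical in
/-- The generating function `π_a ∈ F(W)` attached to a homogeneous element `a`. -/
def piFun (π : Loop g σ N →ₗ[ℂ] Module.End ℂ W) (a : g) : ℤ → Module.End ℂ W :=
  fun k => if h : homog g σ N k a then π (sGen g σ N k a h) else 0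

/-- `(π, K)` lies in category `C`. -/
def InCatC (π : Loop g σ N →ₗ[ℂ] Module.End ℂ W) : Prop :=
  ∃ p : Polynomial ℂ, p ≠ 0 ∧ ∀ (i : ℤ) (a : g), homog g σ N i a →
    memE W (polyAct N W p (piFun g σ N W π a))

/-- `πR` is the map `π_R` determined by `π_R(s^k ⊗ a) = (ψ_R(π_a))_k`,
where `ψ_R(π_a)` is the projection of `π_a` to `E(W)` along `Ē₀(W)`. -/
def IsPiR (π πR : Loop g σ N →ₗ[ℂ] Module.End ℂ W) : Prop :=
  ∀ a : g, (∃ i : ℤ, homog g σ N i a) →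
    ∃ e : ℤ → Module.End ℂ W, memE W e ∧ memE0 N W (piFun g σ N W π a - e) ∧
      ∀ (k : ℤ) (h : homog g σ N k a), πR (sGen g σ N k a h) = e k


section AuxNil

variable {N : ℕ} {W : Type} [AddCommGroup W] [Module ℂ W]

lemma shiftE_apply' (f : ℤ → Module.End ℂ W) (k : ℤ) :
    shiftE N W f k = f (k + N) := rfl

lemma shiftE_pow_apply (j : ℕ) (f : ℤ → Module.End ℂ W) (k : ℤ) :
    ((shiftE N W ^ j) f) k = f (k + (j : ℤ) * (N : ℤ)) := by
  induction j generalizing f k with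
  | zero => simp
  | succ n ih =>
    rw [pow_succ', Module.End.mul_apply, shiftE_apply', ih]
    congr 1
    push_cast
    ring

lemma polyAct_apply (p : Polynomial ℂ) (f : ℤ → Module.End ℂ W) (k : ℤ) :
    polyAct N W p f k = ∑ i ∈ Finset.range (p.natDegree + 1),
      p.coeff i • f (k + (i : ℤ) * (N : ℤ)) := by
  rw [polyAct, Polynomial.aeval_eq_sum_range, LinearMap.sum_apply, Finset.sum_apply]
  refine Finset.sum_congr rfl fun i _ => ?_
  rw [LinearMap.smul_apply, Pi.smul_apply, shiftE_pow_apply]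

lemma strip_aux (f : ℤ → Module.End ℂ W) :
    ∀ (n : ℕ) (p : Polynomial ℂ), p.natDegree ≤ n → p ≠ 0 → polyAct N W p f = 0 →
    ∃ q : Polynomial ℂ, q ≠ 0 ∧ q.coeff 0 ≠ 0 ∧ polyAct N W q f = 0 := by
  intro n
  induction n with
  | zero =>
    intro p hdeg hp h0
    by_cases hc : p.coeff 0 = 0
    · exact absurd ((Polynomial.eq_C_of_natDegree_le_zero hdeg).trans (by rw [hc, map_zero])) hp
    · exact ⟨p, hp, hc, h0⟩
  | succ n ih =>
    intro p hdeg hp h0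
    by_cases hc : p.coeff 0 = 0
    · obtain ⟨q, rfl⟩ := Polynomial.X_dvd_iff.mpr hc
      have hq : q ≠ 0 := by rintro rfl; simp at hp
      have h1 : polyAct N W q f = 0 := by
        have h2 : polyAct N W (Polynomial.X * q) f = shiftE N W (polyAct N W q f) := by
          rw [polyAct, polyAct, map_mul, Polynomial.aeval_X, Module.End.mul_apply]
        rw [h0] at h2
        funext t
        have h3 := congrFun h2.symm (t - N)
        simpa [shiftE_apply'] using h3
      refine ih q ?_ hq h1
      rw [Polynomial.natDegree_X_mul hq] at hdeg
      omega
    · exact ⟨p, hp, hc, h0⟩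

lemma memE_polyAct_eq_zero (hN : 0 < N) (f : ℤ → Module.End ℂ W)
    (hf : memE W f) (p : Polynomial ℂ) (hp : p ≠ 0) (h0 : polyAct N W p f = 0) :
    f = 0 := by
  obtain ⟨q, hq, hqc, hq0⟩ := strip_aux f p.natDegree p le_rfl hp h0
  funext t
  ext w
  show f t w = 0
  obtain ⟨M, hM⟩ := hf w
  have key : ∀ (n : ℕ) (t : ℤ), M ≤ t + (n : ℤ) * (N : ℤ) → f t w = 0 := by
    intro n
    induction n with
    | zero => intro t ht; exact hM t (by simpa using ht)
    | succ n ih =>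
      intro t ht
      have h2 : polyAct N W q f t = 0 := by rw [hq0]; rfl
      rw [polyAct_apply] at h2
      have h3 : (∑ i ∈ Finset.range (q.natDegree + 1),
          q.coeff i • f (t + (i : ℤ) * (N : ℤ))) w = 0 := by rw [h2]; rfl
      rw [LinearMap.sum_apply, Finset.sum_range_succ'] at h3
      have h4 : ∀ i ∈ Finset.range q.natDegree,
          (q.coeff (i+1) • f (t + ((i+1 : ℕ) : ℤ) * (N : ℤ))) w = 0 := by
        intro i _
        have hz : f (t + ((i+1 : ℕ) : ℤ) * (N : ℤ)) w = 0 := by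
          refine ih _ ?_
          push_cast at ht ⊢
          nlinarith [Int.natCast_nonneg i, Int.natCast_nonneg N]
        rw [LinearMap.smul_apply, hz, smul_zero]
      rw [Finset.sum_eq_zero h4, zero_add, LinearMap.smul_apply] at h3
      have h5 : f (t + ((0 : ℕ) : ℤ) * (N : ℤ)) w = 0 :=
        (smul_eq_zero.mp h3).resolve_left hqc
      simpa using h5
  obtain ⟨n, hn⟩ : ∃ n : ℕ, M ≤ t + (n : ℤ) * (N : ℤ) := by
    refine ⟨(M - t).toNat, ?_⟩
    have h5 : (M - t) ≤ ((M - t).toNat : ℤ) := Int.self_le_toNat _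
    have hNN : (1 : ℤ) ≤ (N : ℤ) := by exact_mod_cast hN
    have h6 : ((M - t).toNat : ℤ) ≤ ((M - t).toNat : ℤ) * (N : ℤ) :=
      le_mul_of_one_le_right (Int.natCast_nonneg _) hNN
    linarith
  exact key n t hn

lemma pow_apply_zero_of_le {x : Module.End ℂ W} {w : W} {m : ℕ}
    (hm : (x ^ m) w = 0) {s : ℕ} (hs : m ≤ s) : (x ^ s) w = 0 := by
  obtain ⟨d, rfl⟩ := Nat.exists_eq_add_of_le hs
  rw [add_comm, pow_add, Module.End.mul_apply, hm, map_zero]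

lemma nil_add {x y : Module.End ℂ W} {w : W} (h : Commute x y)
    (hx : ∃ m, (x ^ m) w = 0) (hy : ∃ m, (y ^ m) w = 0) :
    ∃ m, ((x + y) ^ m) w = 0 := by
  obtain ⟨mx, hmx⟩ := hx
  obtain ⟨my, hmy⟩ := hy
  refine ⟨mx + my, ?_⟩
  rw [h.add_pow, LinearMap.sum_apply]
  apply Finset.sum_eq_zero
  intro j hj
  by_cases hjle : j ≤ mx
  · have hz : (y ^ (mx + my - j)) w = 0 := pow_apply_zero_of_le hmy (by omega)
    rw [Module.End.mul_apply, Module.End.mul_apply, Module.End.natCast_apply,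
      map_nsmul, map_nsmul, hz, map_zero, smul_zero]
  · have hz : (x ^ j) w = 0 := pow_apply_zero_of_le hmx (by omega)
    rw [(h.pow_pow j (mx + my - j)).eq, Module.End.mul_apply, Module.End.mul_apply,
      Module.End.natCast_apply, map_nsmul, map_nsmul, hz, map_zero, smul_zero]

lemma nil_smul {x : Module.End ℂ W} {w : W} (c : ℂ)
    (hx : ∃ m, (x ^ m) w = 0) : ∃ m, ((c • x) ^ m) w = 0 := by
  obtain ⟨m, hm⟩ := hx
  exact ⟨m, by rw [smul_pow, LinearMap.smul_apply, hm, smul_zero]⟩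

lemma nil_sum {ι : Type*} [DecidableEq ι] (s : Finset ι) (F : ι → Module.End ℂ W) (w : W)
    (hc : ∀ i ∈ s, ∀ j ∈ s, Commute (F i) (F j))
    (h : ∀ i ∈ s, ∃ m, (F i ^ m) w = 0) :
    ∃ m, ((∑ i ∈ s, F i) ^ m) w = 0 := by
  induction s using Finset.induction_on with
  | empty => exact ⟨1, by simp⟩
  | insert _ _ ha ih =>
    rename_i b s
    rw [Finset.sum_insert ha]
    refine nil_add ?_ (h b (Finset.mem_insert_self b s)) (ih ?_ ?_)
    · exact Commute.sum_right _ _ _ fun j hj =>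
        hc b (Finset.mem_insert_self b s) j (Finset.mem_insert_of_mem hj)
    · exact fun i hi j hj => hc i (Finset.mem_insert_of_mem hi) j (Finset.mem_insert_of_mem hj)
    · exact fun i hi => h i (Finset.mem_insert_of_mem hi)

lemma add_pow_apply_of_right_zero {x y : Module.End ℂ W} (h : Commute x y) {w : W}
    (hy : y w = 0) (m : ℕ) : ((x + y) ^ m) w = (x ^ m) w := by
  induction m with
  | zero => rfl
  | succ n ih =>
    rw [pow_succ', Module.End.mul_apply, ih, LinearMap.add_apply]
    have h1 : y ((x ^ n) w) = 0 := by
      have h2 : (y * x ^ n) w = (x ^ n * y) w := by rw [(h.symm.pow_right n).eq]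
      rw [Module.End.mul_apply, Module.End.mul_apply, hy, map_zero] at h2
      exact h2
    rw [h1, add_zero, pow_succ', Module.End.mul_apply]

end AuxNil

/-- For a category-`C` module structure `(π, K)` on `W`, if `a ∈ g_i`
satisfies `B(a,a) = 0` and all operators `π(s^k ⊗ a)` (for `k ≡ i (mod N)`) act
locally nilpotently on `W`, then so do all operators `π_R(s^k ⊗ a)` and `π_E(s^k ⊗ a)`,
where `π_E = π − π_R`. -/
theorem statement18
    (g : Type) [LieRing g] [LieAlgebra ℂ g] [LieAlgebra.IsSimple ℂ g]
    [FiniteDimensional ℂ g]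
    (N : ℕ) (hN : 0 < N) (σ : g ≃ₗ⁅ℂ⁆ g) (hσ : ∀ a : g, (⇑σ)^[N] a = a)
    (B : LinearMap.BilinForm ℂ g)
    (hBsymm : ∀ a b : g, B a b = B b a)
    (hBinv : ∀ a b c : g, B ⁅a, b⁆ c = B a ⁅b, c⁆)
    (hBnd : ∀ a : g, (∀ b : g, B a b = 0) → a = 0)
    (W : Type) [AddCommGroup W] [Module ℂ W]
    (π πR : Loop g σ N →ₗ[ℂ] Module.End ℂ W) (K : Module.End ℂ W)
    (γ : Loop g σ N →ₗ[ℂ] Loop g σ N →ₗ[ℂ] ℂ) (hγ : IsGamma g σ N B γ)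
    (hmod : IsHatMod g σ N W π K γ) (hC : InCatC g σ N W π)
    (hπR : IsPiR g σ N W π πR)
    (i : ℤ) (a : g) (ha : homog g σ N i a) (hBa : B a a = 0)
    (hnil : ∀ (k : ℤ) (h : homog g σ N k a) (w : W),
      ∃ m : ℕ, (π (sGen g σ N k a h) ^ m) w = 0) :
    (∀ (k : ℤ) (h : homog g σ N k a) (w : W),
      ∃ m : ℕ, (πR (sGen g σ N k a h) ^ m) w = 0) ∧
    (∀ (k : ℤ) (h : homog g σ N k a) (w : W),
      ∃ m : ℕ, ((π - πR) (sGen g σ N k a h) ^ m) w = 0) := by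
  classical
  obtain ⟨e, heE, heE0, heq⟩ := hπR a ⟨i, ha⟩
  set r : ℤ → Module.End ℂ W := piFun g σ N W π a - e with hrdef
  obtain ⟨p, hp0, hpr⟩ := heE0
  -- commutation of the generator operators among themselves
  have hcommXX : ∀ (s t : ℤ) (hs : homog g σ N s a) (ht : homog g σ N t a),
      π (sGen g σ N s a hs) * π (sGen g σ N t a ht)
        = π (sGen g σ N t a ht) * π (sGen g σ N s a hs) := by
    intro s t hs ht
    have hbr : ⁅sGen g σ N s a hs, sGen g σ N t a ht⁆ = (0 : Loop g σ N) := by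
      have hco : (↑⁅sGen g σ N s a hs, sGen g σ N t a ht⁆ : Amb g) = 0 := by
        rw [LieSubalgebra.coe_bracket]
        show ⁅(LaurentPolynomial.T s ⊗ₜ[ℂ] a : Amb g), LaurentPolynomial.T t ⊗ₜ[ℂ] a⁆ = 0
        rw [LieAlgebra.ExtendScalars.bracket_tmul, lie_self, TensorProduct.tmul_zero]
      exact Subtype.ext (by simpa using hco)
    have h2 := hmod.2 (sGen g σ N s a hs) (sGen g σ N t a ht)
    rw [hbr, map_zero, hγ s t a a hs ht] at h2
    have h3 : (if s + t = 0 then (s : ℂ) / (N : ℂ) * B a a else 0) = 0 := by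
      split <;> simp [hBa]
    rw [h3, zero_smul, add_zero] at h2
    exact sub_eq_zero.mp h2
  have hXX : ∀ s t : ℤ, piFun g σ N W π a s * piFun g σ N W π a t
      = piFun g σ N W π a t * piFun g σ N W π a s := by
    intro s t
    by_cases hs : homog g σ N s a
    · by_cases ht : homog g σ N t a
      · have h1 : piFun g σ N W π a s = π (sGen g σ N s a hs) := dif_pos hs
        have h2 : piFun g σ N W π a t = π (sGen g σ N t a ht) := dif_pos ht
        rw [h1, h2]; exact hcommXX s t hs ht
      · have h2 : piFun g σ N W π a t = 0 := dif_neg ht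
        rw [h2, mul_zero, zero_mul]
    · have h1 : piFun g σ N W π a s = 0 := dif_neg hs
      rw [h1, mul_zero, zero_mul]
  -- key: any operator commuting with all piFun values commutes with all e values
  have key0 : ∀ A : Module.End ℂ W,
      (∀ t : ℤ, A * piFun g σ N W π a t = piFun g σ N W π a t * A) →
      (∀ w : W, ∃ M : ℤ, ∀ t ≥ M, e t (A w) = 0) →
      ∀ t : ℤ, A * e t = e t * A := by
    intro A hA hAe
    have hop : ∀ t : ℤ, A * r t - r t * A = -(A * e t - e t * A) := by
      intro t
      have h1 : r t = piFun g σ N W π a t - e t := rfl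
      rw [h1, mul_sub, sub_mul, hA t]
      abel
    have hpg : polyAct N W p (fun t => A * r t - r t * A) = 0 := by
      funext k
      rw [polyAct_apply]
      have h2 : polyAct N W p r k = 0 := by rw [hpr]; rfl
      rw [polyAct_apply] at h2
      have h3 : ∀ x ∈ Finset.range (p.natDegree + 1),
          p.coeff x • ((fun t => A * r t - r t * A) (k + (x : ℤ) * (N : ℤ)))
          = A * (p.coeff x • r (k + (x : ℤ) * (N : ℤ)))
            - (p.coeff x • r (k + (x : ℤ) * (N : ℤ))) * A := by
        intro x _
        show p.coeff x • (A * r (k + (x : ℤ) * (N : ℤ)) - r (k + (x : ℤ) * (N : ℤ)) * A) = _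
        rw [smul_sub, mul_smul_comm, smul_mul_assoc]
      rw [Finset.sum_congr rfl h3, Finset.sum_sub_distrib, ← Finset.mul_sum,
        ← Finset.sum_mul, h2, mul_zero, zero_mul, sub_zero]
      rfl
    have hzero : (fun t => A * r t - r t * A) = 0 := by
      refine memE_polyAct_eq_zero hN _ ?_ p hp0 hpg
      intro w
      obtain ⟨M1, hM1⟩ := heE w
      obtain ⟨M2, hM2⟩ := hAe w
      refine ⟨max M1 M2, fun t ht => ?_⟩
      show (A * r t - r t * A) w = 0
      rw [hop t]
      have he1 : e t w = 0 := hM1 t (le_trans (le_max_left _ _) ht)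
      have he2 : e t (A w) = 0 := hM2 t (le_trans (le_max_right _ _) ht)
      show -((A * e t - e t * A) w) = 0
      rw [LinearMap.sub_apply, Module.End.mul_apply, Module.End.mul_apply, he1, he2,
        map_zero, sub_zero, neg_zero]
    intro t
    have h4 : A * r t = r t * A := by
      have := congrFun hzero t
      exact sub_eq_zero.mp this
    have h5 : e t = piFun g σ N W π a t - r t := by
      have : r t = piFun g σ N W π a t - e t := rfl
      rw [this]; abel
    rw [h5, mul_sub, sub_mul, hA t, h4]
  have hXe : ∀ s t : ℤ, piFun g σ N W π a s * e t = e t * piFun g σ N W π a s := by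
    intro s t
    refine key0 (piFun g σ N W π a s) (fun k => hXX s k) (fun w => ?_) t
    obtain ⟨M, hM⟩ := heE (piFun g σ N W π a s w)
    exact ⟨M, fun u hu => hM u hu⟩
  have hee : ∀ s t : ℤ, e s * e t = e t * e s := by
    intro s t
    refine key0 (e s) (fun k => (hXe k s).symm) (fun w => ?_) t
    obtain ⟨M, hM⟩ := heE (e s w)
    exact ⟨M, fun u hu => hM u hu⟩
  have hXr : ∀ s t : ℤ, Commute (piFun g σ N W π a s) (r t) := by
    intro s t
    have h1 : r t = piFun g σ N W π a t - e t := rfl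
    rw [h1]
    exact Commute.sub_right (hXX s t) (hXe s t)
  have her : ∀ s t : ℤ, Commute (e s) (r t) := by
    intro s t
    have h1 : r t = piFun g σ N W π a t - e t := rfl
    rw [h1]
    exact Commute.sub_right (hXe t s).symm (hee s t)
  have hrr : ∀ s t : ℤ, Commute (r s) (r t) := by
    intro s t
    have h1 : r s = piFun g σ N W π a s - e s := rfl
    rw [h1]
    exact Commute.sub_left (hXr s t) (her s t)
  -- the heart of the matter: r t acts locally nilpotently
  obtain ⟨q, hq0, hqc, hq⟩ := strip_aux r p.natDegree p le_rfl hp0 hpr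
  have main : ∀ (w : W) (t : ℤ), ∃ m : ℕ, ((r t) ^ m) w = 0 := by
    intro w t
    obtain ⟨M, hM⟩ := heE w
    have base : ∀ t : ℤ, M ≤ t → ∃ m : ℕ, ((r t) ^ m) w = 0 := by
      intro t ht
      by_cases hhom : homog g σ N t a
      · obtain ⟨m, hm⟩ := hnil t hhom w
        refine ⟨m, ?_⟩
        have hXt : piFun g σ N W π a t = π (sGen g σ N t a hhom) := dif_pos hhom
        have hsum : piFun g σ N W π a t = r t + e t := by
          have h1 : r t = piFun g σ N W π a t - e t := rfl
          rw [h1]; abel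
        have hcm : Commute (r t) (e t) := (her t t).symm
        have h2 := add_pow_apply_of_right_zero hcm (hM t ht) m
        rw [← hsum, hXt] at h2
        rw [← h2, hm]
      · refine ⟨1, ?_⟩
        have h1 : r t = -(e t) := by
          have h2 : r t = piFun g σ N W π a t - e t := rfl
          have h2b : piFun g σ N W π a t = 0 := dif_neg hhom
          rw [h2, h2b, zero_sub]
        rw [pow_one, h1, LinearMap.neg_apply, hM t ht, neg_zero]
    have step : ∀ (n : ℕ) (t : ℤ), M ≤ t + (n : ℤ) * (N : ℤ) → ∃ m : ℕ, ((r t) ^ m) w = 0 := by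
      intro n
      induction n with
      | zero => intro t ht; exact base t (by simpa using ht)
      | succ n ih =>
        intro t ht
        have h2 : polyAct N W q r t = 0 := by rw [hq]; rfl
        rw [polyAct_apply, Finset.sum_range_succ'] at h2
        have hrt : r t = (-(q.coeff 0)⁻¹) • (∑ x ∈ Finset.range q.natDegree,
            q.coeff (x+1) • r (t + ((x+1 : ℕ) : ℤ) * (N : ℤ))) := by
          have h3 : q.coeff 0 • r (t + ((0:ℕ) : ℤ) * (N : ℤ))
              = -(∑ x ∈ Finset.range q.natDegree,
                  q.coeff (x+1) • r (t + ((x+1 : ℕ) : ℤ) * (N : ℤ))) :=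
            eq_neg_of_add_eq_zero_right h2
          have h4 : ((0:ℕ) : ℤ) * (N : ℤ) = 0 := by simp
          rw [h4, add_zero] at h3
          have h5 : r t = (q.coeff 0)⁻¹ • (q.coeff 0 • r t) := by
            rw [smul_smul, inv_mul_cancel₀ hqc, one_smul]
          rw [h5, h3, smul_neg, ← neg_smul]
        have hnilsum : ∃ m : ℕ, ((∑ x ∈ Finset.range q.natDegree,
            q.coeff (x+1) • r (t + ((x+1 : ℕ) : ℤ) * (N : ℤ))) ^ m) w = 0 := by
          refine nil_sum _ _ w ?_ ?_
          · intro x _ y _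
            exact ((hrr _ _).smul_left _).smul_right _
          · intro x _
            refine nil_smul _ (ih (t + ((x+1 : ℕ) : ℤ) * (N : ℤ)) ?_)
            push_cast at ht ⊢
            nlinarith [Int.natCast_nonneg x, Int.natCast_nonneg N]
        obtain ⟨m, hm⟩ := hnilsum
        refine ⟨m, ?_⟩
        rw [hrt, smul_pow, LinearMap.smul_apply, hm, smul_zero]
    obtain ⟨n, hn⟩ : ∃ n : ℕ, M ≤ t + (n : ℤ) * (N : ℤ) := by
      refine ⟨(M - t).toNat, ?_⟩
      have h5 : (M - t) ≤ ((M - t).toNat : ℤ) := Int.self_le_toNat _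
      have hNN : (1 : ℤ) ≤ (N : ℤ) := by exact_mod_cast hN
      have h6 : ((M - t).toNat : ℤ) ≤ ((M - t).toNat : ℤ) * (N : ℤ) :=
        le_mul_of_one_le_right (Int.natCast_nonneg _) hNN
      linarith
    exact step n t hn
  constructor
  · intro k h w
    rw [heq k h]
    have hXk : piFun g σ N W π a k = π (sGen g σ N k a h) := dif_pos h
    have hek : e k = piFun g σ N W π a k + -(r k) := by
      have h1 : r k = piFun g σ N W π a k - e k := rfl
      rw [h1]; abel
    have h1 : ∃ m : ℕ, ((piFun g σ N W π a k) ^ m) w = 0 := by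
      rw [hXk]; exact hnil k h w
    have h2 : ∃ m : ℕ, ((-(r k)) ^ m) w = 0 := by
      have h3 : -(r k) = (-1 : ℂ) • r k := by rw [neg_one_smul]
      rw [h3]
      exact nil_smul _ (main w k)
    have hcm : Commute (piFun g σ N W π a k) (-(r k)) := (hXr k k).neg_right
    obtain ⟨m, hm⟩ := nil_add hcm h1 h2
    exact ⟨m, by rw [hek]; exact hm⟩
  · intro k h w
    have h1 : (π - πR) (sGen g σ N k a h) = r k := by
      rw [LinearMap.sub_apply, heq k h]
      have h2 : r k = piFun g σ N W π a k - e k := rfl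
      have h2b : piFun g σ N W π a k = π (sGen g σ N k a h) := dif_pos h
      rw [h2, h2b]
    rw [h1]
    exact main w k


end Twisted
end
end

section
/- Let s₀ be a nonzero complex number. The linear map ev : L(g,σ) → g determined by ev(s^k ⊗ a) = s₀^k a for k ∈ ℤ and a ∈ g_k is a surjective Lie algebra homomorphism, and its kernel equals (s^N − s₀^N)·L(g,σ) = {(s^N − s₀^N)·u : u ∈ L(g,σ)}, where (s^N − s₀^N)·(f ⊗ a) = ((s^N − s₀^N)f) ⊗ a (note that multiplication by s^N − s₀^N maps L(g,σ) into itself). -/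
open scoped TensorProduct

noncomputable section
namespace Twisted

variable (g : Type) [LieRing g] [LieAlgebra ℂ g]

variable (σ : g ≃ₗ⁅ℂ⁆ g) (N : ℕ)

-- ## ambient bracket lemmas
lemma amb_add_lie (x₁ x₂ y : Amb g) : ⁅x₁ + x₂, y⁆ = ⁅x₁, y⁆ + ⁅x₂, y⁆ := by
  have := add_lie (L := Amb g) (M := Amb g) x₁ x₂ y; exact this

lemma amb_lie_add (x y₁ y₂ : Amb g) : ⁅x, y₁ + y₂⁆ = ⁅x, y₁⁆ + ⁅x, y₂⁆ := by
  have := lie_add (L := Amb g) (M := Amb g) x y₁ y₂; exact this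

lemma amb_zero_lie (y : Amb g) : ⁅(0 : Amb g), y⁆ = 0 := by
  have := zero_lie (L := Amb g) (M := Amb g) y; exact this

lemma amb_lie_zero (x : Amb g) : ⁅x, (0 : Amb g)⁆ = 0 := by
  have := lie_zero (L := Amb g) (M := Amb g) x; exact this

lemma amb_smul_lie (c : ℂ) (x y : Amb g) : ⁅c • x, y⁆ = c • ⁅x, y⁆ := by
  have := smul_lie (R := ℂ) (L := Amb g) (M := Amb g) c x y; exact this

lemma amb_lie_smul (c : ℂ) (x y : Amb g) : ⁅x, c • y⁆ = c • ⁅x, y⁆ := by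
  have := lie_smul (R := ℂ) (L := Amb g) (M := Amb g) c x y; exact this

-- ## homog lemmas
lemma eps_ne_zero' (N : ℕ) : eps N ≠ 0 := by unfold eps; exact Complex.exp_ne_zero _

lemma eps_pow (N : ℕ) (hN : 0 < N) : eps N ^ N = 1 := by
  unfold eps; exact (Complex.isPrimitiveRoot_exp N hN.ne').pow_eq_one

lemma homog_zero (k : ℤ) : homog g σ N k 0 := by
  unfold homog; rw [show σ (0:g) = 0 from σ.toLieHom.map_zero, smul_zero]

lemma homog_smul (k : ℤ) (c : ℂ) {a : g} (h : homog g σ N k a) : homog g σ N k (c • a) := by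
  unfold homog at h ⊢
  rw [show σ (c • a) = c • σ a from σ.toLieHom.map_smul c a, h, smul_comm]

lemma homog_add (k : ℤ) {a b : g} (ha : homog g σ N k a) (hb : homog g σ N k b) :
    homog g σ N k (a + b) := by
  unfold homog at ha hb ⊢
  rw [show σ (a + b) = σ a + σ b from σ.toLieHom.map_add a b, ha, hb, smul_add]

lemma homog_of_dvd (k l : ℤ) (hd : (N : ℤ) ∣ (k - l)) {a : g} (h : homog g σ N k a)
    (hN : 0 < N) : homog g σ N l a := by
  unfold homog at h ⊢
  rw [h]
  congr 1
  have h1 : eps N ^ (k - l) = 1 :=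
    ((Complex.isPrimitiveRoot_exp N hN.ne').zpow_eq_one_iff_dvd _).2 hd
  have h2 : eps N ^ k = eps N ^ (k - l) * eps N ^ l := by
    rw [← zpow_add₀ (eps_ne_zero' N), sub_add_cancel]
  rw [h2, h1, one_mul]

lemma homog_lie (k l : ℤ) {a b : g} (ha : homog g σ N k a) (hb : homog g σ N l b) :
    homog g σ N (k + l) ⁅a, b⁆ := by
  unfold homog at ha hb ⊢
  rw [show σ ⁅a, b⁆ = ⁅σ a, σ b⁆ from σ.toLieHom.map_lie a b, ha, hb, smul_lie, lie_smul, smul_smul,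
    ← zpow_add₀ (eps_ne_zero' N)]

-- ## Loop = span
lemma loop_toSubmodule : (Loop g σ N).toSubmodule = Submodule.span ℂ (genSet g σ N) := by
  apply le_antisymm
  · show (Loop g σ N).toSubmodule ≤ (LieSubalgebra.mk (Submodule.span ℂ (genSet g σ N)) ?lie).toSubmodule
    case lie =>
      intro x y hx hy
      induction hx using Submodule.span_induction with
      | mem x hxg =>
        induction hy using Submodule.span_induction with
        | mem y hyg =>
          obtain ⟨k, a, ha, rfl⟩ := hxg
          obtain ⟨l, b, hb, rfl⟩ := hyg
          rw [LieAlgebra.ExtendScalars.bracket_tmul, ← LaurentPolynomial.T_add]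
          exact Submodule.subset_span ⟨k + l, ⁅a, b⁆, homog_lie g σ N k l ha hb, rfl⟩
        | zero => rw [amb_lie_zero]; exact Submodule.zero_mem _
        | add y₁ y₂ _ _ p1 p2 => rw [amb_lie_add]; exact Submodule.add_mem _ p1 p2
        | smul c y _ p => rw [amb_lie_smul]; exact Submodule.smul_mem _ c p
      | zero => rw [amb_zero_lie]; exact Submodule.zero_mem _
      | add x₁ x₂ _ _ p1 p2 => rw [amb_add_lie]; exact Submodule.add_mem _ p1 p2
      | smul c x _ p => rw [amb_smul_lie]; exact Submodule.smul_mem _ c p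
    apply LieSubalgebra.lieSpan_le.2
    exact Submodule.subset_span
  · rw [Submodule.span_le]
    exact fun x hx => LieSubalgebra.subset_lieSpan hx

lemma mem_loop_iff (x : Amb g) :
    x ∈ Loop g σ N ↔ x ∈ Submodule.span ℂ (genSet g σ N) := by
  rw [← loop_toSubmodule]; rfl

-- ## evaluation
def evalAt (s₀ : ℂ) (hs₀ : s₀ ≠ 0) : LaurentPolynomial ℂ →ₐ[ℂ] ℂ :=
  AddMonoidAlgebra.lift ℂ ℂ ℤ ((Units.coeHom ℂ).comp (zpowersHom ℂˣ (Units.mk0 s₀ hs₀)))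

lemma evalAt_T (s₀ : ℂ) (hs₀ : s₀ ≠ 0) (k : ℤ) :
    evalAt s₀ hs₀ (LaurentPolynomial.T k) = s₀ ^ k := by
  show evalAt s₀ hs₀ (AddMonoidAlgebra.single k 1) = s₀ ^ k
  rw [evalAt, AddMonoidAlgebra.lift_single]
  simp [Units.val_zpow_eq_zpow_val]

lemma evalAt_C (s₀ : ℂ) (hs₀ : s₀ ≠ 0) (c : ℂ) :
    evalAt s₀ hs₀ (LaurentPolynomial.C c) = c := by
  show evalAt s₀ hs₀ (AddMonoidAlgebra.single 0 c) = c
  rw [evalAt, AddMonoidAlgebra.lift_single]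
  simp

def EA (s₀ : ℂ) (hs₀ : s₀ ≠ 0) : Amb g →ₗ[ℂ] g :=
  (TensorProduct.lid ℂ g).toLinearMap ∘ₗ LinearMap.rTensor g (evalAt s₀ hs₀).toLinearMap

lemma EA_tmul (s₀ : ℂ) (hs₀ : s₀ ≠ 0) (f : LaurentPolynomial ℂ) (a : g) :
    EA g s₀ hs₀ (f ⊗ₜ[ℂ] a) = evalAt s₀ hs₀ f • a := by
  simp [EA]

lemma EA_lie (s₀ : ℂ) (hs₀ : s₀ ≠ 0) (x y : Amb g) :
    EA g s₀ hs₀ ⁅x, y⁆ = ⁅EA g s₀ hs₀ x, EA g s₀ hs₀ y⁆ := by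
  induction x using TensorProduct.induction_on with
  | zero => rw [amb_zero_lie, map_zero, zero_lie]
  | add x₁ x₂ h1 h2 => rw [amb_add_lie, map_add, h1, h2, map_add, add_lie]
  | tmul f a =>
    induction y using TensorProduct.induction_on with
    | zero => rw [amb_lie_zero, map_zero, lie_zero]
    | add y₁ y₂ h1 h2 => rw [amb_lie_add, map_add, h1, h2, map_add, lie_add]
    | tmul h b =>
      rw [LieAlgebra.ExtendScalars.bracket_tmul, EA_tmul, EA_tmul, EA_tmul, map_mul,
        smul_lie, lie_smul, smul_smul]

lemma EA_psmul (s₀ : ℂ) (hs₀ : s₀ ≠ 0) (p : LaurentPolynomial ℂ) (x : Amb g) :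
    EA g s₀ hs₀ (p • x) = evalAt s₀ hs₀ p • EA g s₀ hs₀ x := by
  induction x using TensorProduct.induction_on with
  | zero => rw [smul_zero, map_zero, smul_zero]
  | add x₁ x₂ h1 h2 => rw [smul_add, map_add, h1, h2, map_add, smul_add]
  | tmul f a =>
    rw [TensorProduct.smul_tmul', smul_eq_mul, EA_tmul, EA_tmul, map_mul, smul_smul]

-- ## projections
def projL (r : ℕ) : g →ₗ[ℂ] g :=
  (N : ℂ)⁻¹ • ∑ j ∈ Finset.range N, ((eps N ^ r)⁻¹) ^ j • (σ.toLinearEquiv.toLinearMap ^ j)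

lemma sigma_pow_apply (j : ℕ) (a : g) :
    (σ.toLinearEquiv.toLinearMap ^ j) a = (⇑σ)^[j] a := by
  have h : ⇑σ.toLinearEquiv.toLinearMap = ⇑σ := rfl
  rw [Module.End.pow_apply, h]

lemma projL_apply (r : ℕ) (a : g) :
    projL g σ N r a
      = (N : ℂ)⁻¹ • ∑ j ∈ Finset.range N, ((eps N ^ r)⁻¹) ^ j • (⇑σ)^[j] a := by
  simp only [projL, LinearMap.smul_apply, LinearMap.sum_apply, sigma_pow_apply]

lemma iterate_homog (k : ℤ) {b : g} (hb : homog g σ N k b) (j : ℕ) :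
    (⇑σ)^[j] b = (eps N ^ k) ^ j • b := by
  induction j with
  | zero => simp
  | succ j ih =>
    rw [Function.iterate_succ_apply', ih,
      show σ ((eps N ^ k) ^ j • b) = (eps N ^ k) ^ j • σ b from
        σ.toLieHom.map_smul _ b, hb, smul_smul, ← pow_succ]

lemma geom_zero (z : ℂ) (hzN : z ^ N = 1) (hz : z ≠ 1) :
    ∑ j ∈ Finset.range N, z ^ j = 0 := by
  rw [geom_sum_eq hz, hzN, sub_self, zero_div]

lemma projL_eig (hN : 0 < N) (r : ℕ) (k : ℤ) {b : g} (hb : homog g σ N k b) :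
    projL g σ N r b = if (N : ℤ) ∣ (k - r) then b else 0 := by
  have hNC : (N : ℂ) ≠ 0 := Nat.cast_ne_zero.2 hN.ne'
  have hy : ∀ j : ℕ, ((eps N ^ r)⁻¹) ^ j • (⇑σ)^[j] b
      = (eps N ^ ((k : ℤ) - (r : ℤ))) ^ j • b := by
    intro j
    rw [iterate_homog g σ N k hb j, smul_smul, ← mul_pow]
    congr 2
    rw [← zpow_natCast (eps N) r, ← zpow_neg, ← zpow_add₀ (eps_ne_zero' N)]
    ring_nf
  rw [projL_apply]
  simp only [hy]
  rw [← Finset.sum_smul]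
  by_cases hd : (N : ℤ) ∣ (k - r)
  · rw [if_pos hd]
    have h1 : eps N ^ ((k : ℤ) - (r : ℤ)) = 1 :=
      ((Complex.isPrimitiveRoot_exp N hN.ne').zpow_eq_one_iff_dvd _).2 hd
    rw [h1]
    simp only [one_pow, Finset.sum_const, Finset.card_range, nsmul_eq_mul, mul_one]
    rw [smul_smul, inv_mul_cancel₀ hNC, one_smul]
  · rw [if_neg hd]
    have h1 : eps N ^ ((k : ℤ) - (r : ℤ)) ≠ 1 := fun h =>
      hd (((Complex.isPrimitiveRoot_exp N hN.ne').zpow_eq_one_iff_dvd _).1 h)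
    have h2 : (eps N ^ ((k : ℤ) - (r : ℤ))) ^ N = 1 := by
      rw [← zpow_natCast _ N, ← zpow_mul, mul_comm, zpow_mul,
        zpow_natCast (eps N) N, eps_pow N hN, one_zpow]
    rw [geom_zero N _ h2 h1, zero_smul, smul_zero]

lemma projL_homog (hσ : ∀ a : g, (⇑σ)^[N] a = a) (hN : 0 < N) (r : ℕ) (a : g) :
    homog g σ N (r : ℤ) (projL g σ N r a) := by
  set x : ℂ := (eps N ^ r)⁻¹ with hx
  have hxinv : eps N ^ (r : ℤ) * x = 1 := by
    rw [hx, zpow_natCast, mul_inv_cancel₀ (pow_ne_zero r (eps_ne_zero' N))]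
  set t : ℕ → g := fun j => x ^ j • (⇑σ)^[j] a with ht
  have htN : t N = t 0 := by
    rw [ht]
    simp only []
    rw [hσ a, Function.iterate_zero_apply, pow_zero, one_smul, hx, ← zpow_natCast (eps N) r,
      ← zpow_natCast _ N, ← zpow_neg, ← zpow_mul]
    rw [show (-(r:ℤ)) * (N:ℤ) = (N:ℤ) * (-(r:ℤ)) by ring, zpow_mul, zpow_natCast (eps N) N,
      eps_pow N hN, one_zpow, one_smul]
  have hshift : ∑ j ∈ Finset.range N, t (j + 1) = ∑ j ∈ Finset.range N, t j := by
    have h1 := Finset.sum_range_succ t N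
    have h2 := Finset.sum_range_succ' t N
    rw [h1, htN] at h2
    exact add_right_cancel h2.symm
  have hstep : ∀ j : ℕ, σ (t j) = eps N ^ (r : ℤ) • t (j + 1) := by
    intro j
    rw [ht]
    simp only []
    rw [show σ (x ^ j • (⇑σ)^[j] a) = x ^ j • σ ((⇑σ)^[j] a) from σ.toLieHom.map_smul _ _,
      ← Function.iterate_succ_apply' σ, smul_smul]
    show x ^ j • (⇑σ)^[j+1] a = (eps N ^ (r:ℤ) * x ^ (j + 1)) • (⇑σ)^[j+1] a
    congr 1
    rw [pow_succ, ← mul_assoc, mul_comm (eps N ^ (r:ℤ)) (x ^ j), mul_assoc, hxinv, mul_one]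
  unfold homog
  rw [projL_apply]
  rw [show σ ((N:ℂ)⁻¹ • ∑ j ∈ Finset.range N, x ^ j • (⇑σ)^[j] a)
      = (N:ℂ)⁻¹ • σ (∑ j ∈ Finset.range N, x ^ j • (⇑σ)^[j] a) from σ.toLieHom.map_smul _ _,
    show σ (∑ j ∈ Finset.range N, x ^ j • (⇑σ)^[j] a)
      = ∑ j ∈ Finset.range N, σ (x ^ j • (⇑σ)^[j] a) from
        map_sum σ.toLieHom.toLinearMap (fun j => x ^ j • (⇑σ)^[j] a) (Finset.range N)]
  calc (N:ℂ)⁻¹ • ∑ j ∈ Finset.range N, σ (x ^ j • (⇑σ)^[j] a)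
      = (N:ℂ)⁻¹ • ∑ j ∈ Finset.range N, eps N ^ (r:ℤ) • t (j+1) := by
        congr 1; exact Finset.sum_congr rfl fun j _ => hstep j
    _ = eps N ^ (r:ℤ) • ((N:ℂ)⁻¹ • ∑ j ∈ Finset.range N, t j) := by
        rw [← Finset.smul_sum, hshift, smul_comm]

lemma projL_sum (hσ : ∀ a : g, (⇑σ)^[N] a = a) (hN : 0 < N) (a : g) :
    ∑ r ∈ Finset.range N, projL g σ N r a = a := by
  have hNC : (N : ℂ) ≠ 0 := Nat.cast_ne_zero.2 hN.ne'
  simp only [projL_apply]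
  rw [← Finset.smul_sum, Finset.sum_comm]
  have hinner : ∀ j ∈ Finset.range N,
      ∑ r ∈ Finset.range N, ((eps N ^ r)⁻¹) ^ j • (⇑σ)^[j] a
        = (if j = 0 then (N : ℂ) else 0) • (⇑σ)^[j] a := by
    intro j hj
    rw [← Finset.sum_smul]
    congr 1
    have hswap : ∀ r : ℕ, ((eps N ^ r)⁻¹) ^ j = ((eps N ^ j)⁻¹) ^ r := by
      intro r; rw [← inv_pow, ← inv_pow, ← pow_mul, ← pow_mul, mul_comm]
    simp only [hswap]
    by_cases hj0 : j = 0
    · subst hj0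
      simp
    · rw [if_neg hj0]
      apply geom_zero
      · rw [inv_pow, ← pow_mul, mul_comm, pow_mul, eps_pow N hN, one_pow, inv_one]
      · rw [ne_eq, inv_eq_one]
        exact (Complex.isPrimitiveRoot_exp N hN.ne').pow_ne_one_of_pos_of_lt
          hj0 (Finset.mem_range.1 hj)
  rw [Finset.sum_congr rfl hinner]
  have hsingle : ∑ j ∈ Finset.range N, (if j = 0 then (N : ℂ) else 0) • (⇑σ)^[j] a
      = (N : ℂ) • a := by
    rw [Finset.sum_eq_single 0]
    · simp
    · intro b _ hb0; rw [if_neg hb0, zero_smul]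
    · intro h; exact absurd (Finset.mem_range.2 hN) h
  rw [hsingle, smul_smul, inv_mul_cancel₀ hNC, one_smul]


-- ## divisibility by T^N - s₀^N
open LaurentPolynomial in
def spanTN : Submodule ℂ (LaurentPolynomial ℂ) :=
  Submodule.span ℂ {p : LaurentPolynomial ℂ | ∃ j : ℤ, p = T ((N : ℤ) * j)}

open LaurentPolynomial in
lemma T_mul_mem_spanTN (j₀ : ℤ) {p : LaurentPolynomial ℂ} (hp : p ∈ spanTN N) :
    T ((N : ℤ) * j₀) * p ∈ spanTN N := by
  induction hp using Submodule.span_induction with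
  | mem q hq =>
    obtain ⟨j, rfl⟩ := hq
    rw [← T_add]
    exact Submodule.subset_span ⟨j₀ + j, by rw [mul_add]⟩
  | zero => rw [mul_zero]; exact Submodule.zero_mem _
  | add x y _ _ px py => rw [mul_add]; exact Submodule.add_mem _ px py
  | smul c x _ px => rw [mul_smul_comm]; exact Submodule.smul_mem _ c px

open LaurentPolynomial in
lemma C_mul_T_mem_spanTN (c : ℂ) (j : ℤ) : C c * T ((N : ℤ) * j) ∈ spanTN N := by
  rw [C_eq_algebraMap, ← Algebra.smul_def]
  exact Submodule.smul_mem _ c (Submodule.subset_span ⟨j, rfl⟩)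

open LaurentPolynomial in
lemma Qdiv (s₀ : ℂ) (hs₀ : s₀ ≠ 0) (m : ℤ) :
    ∃ q : LaurentPolynomial ℂ, q ∈ spanTN N ∧
      T ((N : ℤ) * m) - C (s₀ ^ ((N : ℤ) * m))
        = (T (N : ℤ) - C (s₀ ^ (N : ℕ))) * q := by
  have hCN : (C (s₀ ^ (N : ℕ)) : LaurentPolynomial ℂ) = C (s₀ ^ ((N : ℤ))) := by
    rw [← zpow_natCast s₀ N]
  induction m using Int.induction_on with
  | zero => exact ⟨0, Submodule.zero_mem _, by simp⟩
  | succ i ih =>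
    obtain ⟨q, hspan, hq⟩ := ih
    rw [hCN] at hq
    refine ⟨T ((N:ℤ) * 1) * q + C (s₀ ^ ((N : ℤ) * i)) * T ((N:ℤ) * 0), ?_, ?_⟩
    · exact Submodule.add_mem _ (T_mul_mem_spanTN N 1 hspan) (C_mul_T_mem_spanTN N _ 0)
    · have h3 : (T ((N:ℤ) * 0) : LaurentPolynomial ℂ) = 1 := by rw [mul_zero, T_zero]
      have h4 : (T ((N:ℤ) * 1) : LaurentPolynomial ℂ) = T (N:ℤ) := by rw [mul_one]
      have h1 : (T ((N:ℤ) * ((i:ℤ) + 1)) : LaurentPolynomial ℂ) = T (N:ℤ) * T ((N:ℤ) * i) := by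
        rw [show (N:ℤ) * ((i:ℤ) + 1) = (N:ℤ) + (N:ℤ) * i by ring, T_add]
      have hC2 : (C (s₀ ^ ((N:ℤ) * ((i:ℤ) + 1))) : LaurentPolynomial ℂ)
          = C (s₀ ^ ((N:ℤ))) * C (s₀ ^ ((N:ℤ) * i)) := by
        rw [show ((N:ℤ) * ((i:ℤ) + 1)) = (N:ℤ) + (N:ℤ) * i by ring, zpow_add₀ hs₀, map_mul]
      rw [hCN, h3, h4, h1, hC2]
      linear_combination (T ((N:ℤ))) * hq
  | pred i ih =>
    obtain ⟨q, hspan, hq⟩ := ih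
    rw [hCN] at hq
    refine ⟨T ((N:ℤ) * (-1)) * q - C (s₀ ^ ((N : ℤ) * (-(i:ℤ) - 1))) * T ((N:ℤ) * (-1)), ?_, ?_⟩
    · exact Submodule.sub_mem _ (T_mul_mem_spanTN N (-1) hspan) (C_mul_T_mem_spanTN N _ (-1))
    · have h1 : (T ((N:ℤ) * (-(i:ℤ) - 1)) : LaurentPolynomial ℂ)
          = T ((N:ℤ) * (-1)) * T ((N:ℤ) * (-(i:ℤ))) := by
        rw [show (N:ℤ) * (-(i:ℤ) - 1) = (N:ℤ) * (-1) + (N:ℤ) * (-(i:ℤ)) by ring, T_add]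
      have h3 : (T ((N:ℤ) * (-1)) : LaurentPolynomial ℂ) * T (N:ℤ) = 1 := by
        rw [← T_add, show (N:ℤ) * (-1) + (N:ℤ) = 0 by ring, T_zero]
      have hC2 : (C (s₀ ^ ((N:ℤ) * (-(i:ℤ)))) : LaurentPolynomial ℂ)
          = C (s₀ ^ ((N:ℤ) * (-(i:ℤ) - 1))) * C (s₀ ^ ((N:ℤ))) := by
        rw [← map_mul, ← zpow_add₀ hs₀, show ((N:ℤ) * (-(i:ℤ) - 1) + (N:ℤ)) = (N:ℤ) * (-(i:ℤ)) by ring]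
      rw [hC2] at hq
      rw [hCN, h1]
      linear_combination (T ((N:ℤ) * (-1))) * hq + (C (s₀ ^ ((N:ℤ) * (-(i:ℤ) - 1)))) * h3

-- ## membership of products in Loop
open LaurentPolynomial in
lemma memLoopMul (hN : 0 < N) {p : LaurentPolynomial ℂ} (hp : p ∈ spanTN N) (k : ℤ) (a : g)
    (ha : homog g σ N k a) : (p * T k) ⊗ₜ[ℂ] a ∈ Loop g σ N := by
  induction hp using Submodule.span_induction with
  | mem q hq =>
    obtain ⟨j, rfl⟩ := hq
    rw [← T_add]
    exact LieSubalgebra.subset_lieSpan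
      ⟨(N:ℤ) * j + k, a, homog_of_dvd g σ N k ((N:ℤ) * j + k) ⟨-j, by ring⟩ ha hN, rfl⟩
  | zero => rw [zero_mul, TensorProduct.zero_tmul]; exact (Loop g σ N).zero_mem
  | add x y _ _ px py =>
    rw [add_mul, TensorProduct.add_tmul]; exact (Loop g σ N).add_mem px py
  | smul c x _ px =>
    rw [smul_mul_assoc, ← TensorProduct.smul_tmul']; exact (Loop g σ N).smul_mem c px

-- ## representation of Loop elements
lemma loop_repr (u : Loop g σ N) :
    ∃ (n : ℕ) (k : Fin n → ℤ) (a : Fin n → g),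
      (∀ i, homog g σ N (k i) (a i)) ∧
      (u : Amb g) = ∑ i, LaurentPolynomial.T (k i) ⊗ₜ[ℂ] a i := by
  have h := (mem_loop_iff g σ N u.1).1 u.2
  rw [Submodule.mem_span_set'] at h
  obtain ⟨n, f, gg, hsum⟩ := h
  have hch : ∀ i, ∃ (k : ℤ) (a : g), homog g σ N k a ∧
      (gg i : Amb g) = LaurentPolynomial.T k ⊗ₜ[ℂ] a := fun i => (gg i).2
  choose k a hhom heq using hch
  refine ⟨n, k, fun i => f i • a i, fun i => homog_smul g σ N (k i) (f i) (hhom i), ?_⟩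
  rw [← hsum]
  exact Finset.sum_congr rfl fun i _ => by rw [heq i, ← TensorProduct.tmul_smul]

-- ## ev agrees with EA on Loop
lemma ev_eq_EA (s₀ : ℂ) (hs₀ : s₀ ≠ 0) (ev : Loop g σ N →ₗ[ℂ] g)
    (hev : ∀ (k : ℤ) (a : g) (h : homog g σ N k a),
      ev (sGen g σ N k a h) = (s₀ ^ k : ℂ) • a) (u : Loop g σ N) :
    ev u = EA g s₀ hs₀ (u : Amb g) := by
  obtain ⟨x, hx⟩ := u
  have hx' : x ∈ Submodule.span ℂ (genSet g σ N) := (mem_loop_iff g σ N x).1 hx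
  revert hx
  induction hx' using Submodule.span_induction with
  | mem y hy =>
    intro hmem
    obtain ⟨kk, aa, ha, rfl⟩ := hy
    have h1 : (⟨_, hmem⟩ : Loop g σ N) = sGen g σ N kk aa ha := Subtype.ext rfl
    have h2 : ((sGen g σ N kk aa ha : Loop g σ N) : Amb g)
        = LaurentPolynomial.T kk ⊗ₜ[ℂ] aa := rfl
    rw [h1, hev, h2, EA_tmul, evalAt_T]
  | zero =>
    intro hmem
    have h1 : (⟨0, hmem⟩ : Loop g σ N) = 0 := rfl
    have h2 : ((0 : Loop g σ N) : Amb g) = 0 := rfl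
    rw [h1, map_zero, h2, map_zero]
  | add x y hxs hys px py =>
    intro hmem
    have hxm : x ∈ Loop g σ N := (mem_loop_iff g σ N x).2 hxs
    have hym : y ∈ Loop g σ N := (mem_loop_iff g σ N y).2 hys
    have h1 : (⟨x + y, hmem⟩ : Loop g σ N) = ⟨x, hxm⟩ + ⟨y, hym⟩ := rfl
    have h2 : (((⟨x, hxm⟩ + ⟨y, hym⟩ : Loop g σ N)) : Amb g) = x + y := rfl
    rw [h1, map_add, px hxm, py hym, h2, map_add]
  | smul c x hxs px =>
    intro hmem
    have hxm : x ∈ Loop g σ N := (mem_loop_iff g σ N x).2 hxs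
    have h1 : (⟨c • x, hmem⟩ : Loop g σ N) = c • ⟨x, hxm⟩ := rfl
    have h2 : (((c • ⟨x, hxm⟩ : Loop g σ N)) : Amb g) = c • x := rfl
    rw [h1, map_smul, px hxm, h2, map_smul]

-- dvd characterisation for residues
lemma dvd_iff_eq_nat (hN : 0 < N) {x y : ℕ} (hx : x < N) (hy : y < N) :
    (N : ℤ) ∣ ((x : ℤ) - (y : ℤ)) ↔ x = y := by
  constructor
  · rintro ⟨c, hc⟩
    have hb1 : (x : ℤ) - y < N := by omega
    have hb2 : -(N : ℤ) < (x : ℤ) - y := by omega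
    rw [hc] at hb1 hb2
    have hN' : (0 : ℤ) < N := by exact_mod_cast hN
    have hc1 : c < 1 := by nlinarith
    have hc2 : -1 < c := by nlinarith
    have : c = 0 := by omega
    rw [this, mul_zero] at hc
    omega
  · rintro rfl; simp

lemma homog_sum {ι : Type} (s : Finset ι) (k : ℤ) (f : ι → g)
    (h : ∀ i ∈ s, homog g σ N k (f i)) : homog g σ N k (∑ i ∈ s, f i) := by
  classical
  induction s using Finset.induction_on with
  | empty => simpa using homog_zero g σ N k
  | insert _ _ hni ih =>
    rw [Finset.sum_insert hni]
    exact homog_add g σ N k (h _ (Finset.mem_insert_self _ _))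
      (ih fun i hi => h i (Finset.mem_insert_of_mem hi))



/-- For a nonzero `s₀ ∈ ℂ`, the linear evaluation map
`ev : L(g,σ) → g` with `ev(s^k ⊗ a) = s₀^k a` is a surjective Lie algebra homomorphism
whose kernel is `(s^N − s₀^N)·L(g,σ)`. -/
theorem statement19
    (g : Type) [LieRing g] [LieAlgebra ℂ g] [LieAlgebra.IsSimple ℂ g]
    [FiniteDimensional ℂ g]
    (N : ℕ) (hN : 0 < N) (σ : g ≃ₗ⁅ℂ⁆ g) (hσ : ∀ a : g, (⇑σ)^[N] a = a)
    (s₀ : ℂ) (hs₀ : s₀ ≠ 0)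
    (ev : Loop g σ N →ₗ[ℂ] g)
    (hev : ∀ (k : ℤ) (a : g) (h : homog g σ N k a),
      ev (sGen g σ N k a h) = (s₀ ^ k : ℂ) • a) :
    (∀ u v : Loop g σ N, ev ⁅u, v⁆ = ⁅ev u, ev v⁆) ∧
    Function.Surjective ev ∧
    ∀ u : Loop g σ N, ev u = 0 ↔
      ∃ v : Loop g σ N, (u : Amb g) =
        (LaurentPolynomial.T (N : ℤ) - LaurentPolynomial.C (s₀ ^ (N : ℕ))) •
          (v : Amb g) := by
  have hEv : ∀ u : Loop g σ N, ev u = EA g s₀ hs₀ (u : Amb g) :=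
    ev_eq_EA g σ N s₀ hs₀ ev hev
  have hD0 : evalAt s₀ hs₀
      (LaurentPolynomial.T (N:ℤ) - LaurentPolynomial.C (s₀ ^ (N:ℕ))) = 0 := by
    rw [map_sub, evalAt_T, evalAt_C, ← zpow_natCast s₀ N, sub_self]
  refine ⟨?_, ?_, ?_⟩
  · intro u v
    have hco : ((⁅u, v⁆ : Loop g σ N) : Amb g) = ⁅(u : Amb g), (v : Amb g)⁆ := rfl
    rw [hEv ⁅u, v⁆, hco, EA_lie, ← hEv u, ← hEv v]
  · intro a
    refine ⟨∑ r ∈ Finset.range N, s₀ ^ (-(r:ℤ)) •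
      sGen g σ N (r:ℤ) (projL g σ N r a) (projL_homog g σ N hσ hN r a), ?_⟩
    rw [map_sum]
    have hterm : ∀ r ∈ Finset.range N,
        ev (s₀ ^ (-(r:ℤ)) • sGen g σ N (r:ℤ) (projL g σ N r a) (projL_homog g σ N hσ hN r a))
          = projL g σ N r a := by
      intro r _
      rw [map_smul, hev, smul_smul, ← zpow_add₀ hs₀, neg_add_cancel, zpow_zero, one_smul]
    rw [Finset.sum_congr rfl hterm]
    exact projL_sum g σ N hσ hN a
  · intro u
    constructor
    · intro hu
      obtain ⟨n, k, a, hhom, hrepr⟩ := loop_repr g σ N u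
      have hNz : (N:ℤ) ≠ 0 := by exact_mod_cast hN.ne'
      have hNpos : (0:ℤ) < N := by exact_mod_cast hN
      have hrm : ∀ i : Fin n, ∃ (ri mi : ℤ), k i = ri + (N:ℤ) * mi ∧ 0 ≤ ri ∧ ri < N :=
        fun i => ⟨k i % (N:ℤ), k i / (N:ℤ), (Int.emod_add_mul_ediv (k i) (N:ℤ)).symm,
          Int.emod_nonneg _ hNz, Int.emod_lt_of_pos _ hNpos⟩
      choose r m hkrm hr0 hrN using hrm
      have hhomr : ∀ i, homog g σ N (r i) (a i) :=
        fun i => homog_of_dvd g σ N (k i) (r i) ⟨m i, by rw [hkrm i]; ring⟩ (hhom i) hN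
      choose q hqspan hqeq using fun i => Qdiv N s₀ hs₀ (m i)
      set D := LaurentPolynomial.T (N:ℤ) - LaurentPolynomial.C (s₀ ^ (N:ℕ)) with hDdef
      set V : Amb g := ∑ i, (q i * LaurentPolynomial.T (r i)) ⊗ₜ[ℂ] a i with hVdef
      have hVLoop : V ∈ Loop g σ N := by
        rw [hVdef]
        exact sum_mem fun i _ => memLoopMul g σ N hN (hqspan i) (r i) (a i) (hhomr i)
      set Rp : Amb g := ∑ i, (s₀ ^ ((N:ℤ) * m i)) •
        (LaurentPolynomial.T (r i) ⊗ₜ[ℂ] a i) with hRpdef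
      have hDsm : ∀ i : Fin n, D • ((q i * LaurentPolynomial.T (r i)) ⊗ₜ[ℂ] a i)
          = LaurentPolynomial.T (k i) ⊗ₜ[ℂ] a i
            - (s₀ ^ ((N:ℤ) * m i)) • (LaurentPolynomial.T (r i) ⊗ₜ[ℂ] a i) := by
        intro i
        rw [TensorProduct.smul_tmul', smul_eq_mul, ← mul_assoc, ← hqeq i, sub_mul,
          ← LaurentPolynomial.T_add,
          show (N:ℤ) * m i + r i = k i from by rw [hkrm i]; ring,
          TensorProduct.sub_tmul]
        congr 1
        rw [TensorProduct.smul_tmul', LaurentPolynomial.C_eq_algebraMap, ← Algebra.smul_def]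
      have hdecomp : (u : Amb g) = D • V + Rp := by
        rw [hrepr, hVdef, hRpdef, Finset.smul_sum, ← Finset.sum_add_distrib]
        refine Finset.sum_congr rfl fun i _ => ?_
        rw [hDsm i]
        abel
      have hEARp : EA g s₀ hs₀ Rp = 0 := by
        have h0 : (0 : g) = EA g s₀ hs₀ (D • V) + EA g s₀ hs₀ Rp := by
          rw [← map_add, ← hdecomp, ← hEv u, hu]
        rw [EA_psmul, hD0, zero_smul, zero_add] at h0
        exact h0.symm
      set b : ℕ → g := fun rr => ∑ i ∈ Finset.univ.filter (fun i => (r i).toNat = rr),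
        (s₀ ^ ((N:ℤ) * m i)) • a i with hbdef
      have hreq : ∀ (rr : ℕ) (i : Fin n), (r i).toNat = rr → r i = (rr:ℤ) := fun rr i h => by
        rw [← h, Int.toNat_of_nonneg (hr0 i)]
      have hbhom : ∀ rr : ℕ, homog g σ N (rr:ℤ) (b rr) := by
        intro rr
        rw [hbdef]
        apply homog_sum
        intro i hi
        have hri : r i = (rr:ℤ) := hreq rr i (Finset.mem_filter.1 hi).2
        exact homog_smul g σ N _ _ (hri ▸ hhomr i)
      have hRpb : Rp = ∑ rr ∈ Finset.range N, LaurentPolynomial.T (rr:ℤ) ⊗ₜ[ℂ] b rr := by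
        rw [hRpdef, ← Finset.sum_fiberwise_of_maps_to
          (g := fun i : Fin n => (r i).toNat) (t := Finset.range N)
          (fun i _ => Finset.mem_range.2 (by show (r i).toNat < N; have h1 := hr0 i; have h2 := hrN i; omega))
          (fun i => (s₀ ^ ((N:ℤ) * m i)) • (LaurentPolynomial.T (r i) ⊗ₜ[ℂ] a i))]
        refine Finset.sum_congr rfl fun rr _ => ?_
        rw [hbdef, TensorProduct.tmul_sum]
        refine Finset.sum_congr rfl fun i hi => ?_
        have hri : r i = (rr:ℤ) := hreq rr i (Finset.mem_filter.1 hi).2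
        rw [TensorProduct.tmul_smul, hri]
      have hEARpb : ∑ rr ∈ Finset.range N, s₀ ^ ((rr:ℤ)) • b rr = 0 := by
        have h1 : EA g s₀ hs₀ Rp = ∑ rr ∈ Finset.range N, s₀ ^ ((rr:ℤ)) • b rr := by
          rw [hRpb, map_sum]
          exact Finset.sum_congr rfl fun rr _ => by rw [EA_tmul, evalAt_T]
        rw [← h1, hEARp]
      have hbz : ∀ rr ∈ Finset.range N, b rr = 0 := by
        intro rr hrr
        have h1 := congrArg (projL g σ N rr) hEARpb
        rw [map_sum, map_zero] at h1
        have h2 : ∀ rr' ∈ Finset.range N, projL g σ N rr (s₀ ^ ((rr':ℤ)) • b rr')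
            = if rr' = rr then s₀ ^ ((rr:ℤ)) • b rr else 0 := by
          intro rr' hrr'
          rw [map_smul, projL_eig g σ N hN rr (rr':ℤ) (hbhom rr')]
          by_cases h : rr' = rr
          · subst h; rw [if_pos (by simp), if_pos rfl]
          · rw [if_neg (fun hdd => h ((dvd_iff_eq_nat N hN (Finset.mem_range.1 hrr')
              (Finset.mem_range.1 hrr)).1 hdd)), if_neg h, smul_zero]
        rw [Finset.sum_congr rfl h2, Finset.sum_ite_eq' (Finset.range N) rr] at h1
        rw [if_pos hrr] at h1
        rcases smul_eq_zero.1 h1 with h | h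
        · exact absurd h (zpow_ne_zero _ hs₀)
        · exact h
      have hRp0 : Rp = 0 := by
        rw [hRpb]
        refine Finset.sum_eq_zero fun rr hrr => ?_
        rw [hbz rr hrr, TensorProduct.tmul_zero]
      refine ⟨⟨V, hVLoop⟩, ?_⟩
      rw [hdecomp, hRp0, add_zero]
    · rintro ⟨v, hv⟩
      rw [hEv u, hv, EA_psmul, hD0, zero_smul]

end Twisted
end
end
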